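/- The set of root marginals of finite tree 2-SAT formulas is exactly the set of rational numbers strictly between 0 and 1: A_T = ℚ ∩ (0,1). -/

import Mathlib

/-- A 2-SAT clause over variables `V`: two distinct variables `x ≠ y` together with
signs `sx, sy : Bool` (`true` encodes `+1`, `false` encodes `-1`). -/
structure Clause2 (V : Type) where
  x : V
  y : V
  sx : Bool
  sy : Bool
  hxy : x ≠ y

variable {V : Type} [Fintype V] [DecidableEq V]

/-- Variable `v` occurs in clause `a`. -/
def occurs (v : V) (a : Clause2 V) : Prop := v = a.x ∨ v = a.y

instance (v : V) (a : Clause2 V) : Decidable (occurs v a) := by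
  unfold occurs; infer_instance

/-- An assignment `σ : V → Bool` satisfies clause `a` if one of its two literals is satisfied. -/
def satClause (σ : V → Bool) (a : Clause2 V) : Prop := σ a.x = a.sx ∨ σ a.y = a.sy

instance (σ : V → Bool) (a : Clause2 V) : Decidable (satClause σ a) := by
  unfold satClause; infer_instance

/-- The set `S(Φ)` of satisfying assignments of the formula `Φ`. -/
def sols (Φ : Finset (Clause2 V)) : Finset (V → Bool) :=
  Finset.univ.filter fun σ => ∀ a ∈ Φ, satClause σ a

/-- The marginal `μ_Φ(σ_v = b)`: the fraction of satisfying assignments with `σ v = b`. -/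
noncomputable def marginal (Φ : Finset (Clause2 V)) (v : V) (b : Bool) : ℝ :=
  (((sols Φ).filter fun σ => σ v = b).card : ℝ) / ((sols Φ).card : ℝ)

/-- The factor graph `G(Φ)`: the bipartite graph on variables and clauses with an edge
`{v, a}` whenever `v` occurs in `a`. -/
def factorGraph (Φ : Finset (Clause2 V)) : SimpleGraph (V ⊕ {a // a ∈ Φ}) :=
  SimpleGraph.fromRel fun u w =>
    match u, w with
    | Sum.inl v, Sum.inr a => occurs v a.val
    | _, _ => False

/-- `A_T`: the set of all root marginals `μ_T(σ_o = 1)` of finite rooted tree formulas. -/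
noncomputable def treeMarginals : Set ℝ :=
  {r | ∃ (n : ℕ) (Φ : Finset (Clause2 (Fin n))) (o : Fin n),
        (factorGraph Φ).IsTree ∧ marginal Φ o true = r}

set_option linter.unusedSectionVars false
set_option linter.unusedVariables false
set_option maxHeartbeats 1000000

section Aux1

lemma fg_adj_inl_inr {Φ : Finset (Clause2 V)} {v : V} {a : {a // a ∈ Φ}} :
    (factorGraph Φ).Adj (Sum.inl v) (Sum.inr a) ↔ occurs v a.val := by
  simp [factorGraph, SimpleGraph.fromRel_adj]

lemma fg_adj_inr {Φ : Finset (Clause2 V)} {a : {a // a ∈ Φ}} {w} :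
    (factorGraph Φ).Adj (Sum.inr a) w → ∃ v : V, w = Sum.inl v ∧ occurs v a.val := by
  rcases w with v | b
  · intro h
    refine ⟨v, rfl, ?_⟩
    rw [SimpleGraph.adj_comm, fg_adj_inl_inr] at h
    exact h
  · intro h
    rw [factorGraph, SimpleGraph.fromRel_adj] at h
    exact absurd h.2 (by simp)



open SimpleGraph Walk in
lemma exists_sol (Φ : Finset (Clause2 V)) (o : V)
    (hT : (factorGraph Φ).IsTree) (b : Bool) :
    ∃ σ ∈ sols Φ, σ o = b := by
  classical
  set G := factorGraph Φ with hG
  have hU := hT.existsUnique_path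
  -- the chosen path from any vertex to `inl o`
  let pw : ∀ w : V ⊕ {a // a ∈ Φ}, G.Walk w (Sum.inl o) :=
    fun w => (hU w (Sum.inl o)).exists.choose
  have hpw : ∀ w, (pw w).IsPath := fun w => (hU w (Sum.inl o)).exists.choose_spec
  have huniq : ∀ w (q : G.Walk w (Sum.inl o)), q.IsPath → q = pw w := by
    intro w q hq
    exact ((hU w (Sum.inl o)).unique hq (hpw w))
  let σ : V → Bool := fun v =>
    if v = o then b else
      match (pw (Sum.inl v)).getVert 1 with
      | Sum.inr a => if v = a.val.x then a.val.sx else a.val.sy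
      | Sum.inl _ => true
  have hσo : σ o = b := by simp [σ]
  refine ⟨σ, ?_, hσo⟩
  rw [sols, Finset.mem_filter]
  refine ⟨Finset.mem_univ _, ?_⟩
  intro a ha
  set A : V ⊕ {a // a ∈ Φ} := Sum.inr ⟨a, ha⟩ with hA
  set P := pw A with hP
  have hPpath : P.IsPath := hpw A
  have hPnotnil : ¬ P.Nil := Walk.not_nil_of_ne (by simp [hA])
  have hlen : 0 < P.length := Walk.not_nil_iff_lt_length.mp hPnotnil
  have hadj1 : G.Adj A (P.getVert 1) := by
    have := P.adj_getVert_succ (i := 0) hlen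
    simpa using this
  obtain ⟨p, hp1, hpocc⟩ := fg_adj_inr hadj1
  -- key claim
  have key : ∀ c : V, occurs c a → Sum.inl c ≠ P.getVert 1 →
      (σ c = if c = a.x then a.sx else a.sy) := by
    intro c hocc hne
    have hadjc : G.Adj (Sum.inl c) A := fg_adj_inl_inr.mpr hocc
    -- inl c is not in the support of P
    have hmem : Sum.inl c ∉ P.support := by
      intro hmem
      set Q := P.dropUntil (Sum.inl c) hmem with hQ
      have hQpath : Q.IsPath := hPpath.dropUntil hmem
      have hAQ : A ∉ Q.support := by
        have hspec := P.take_spec hmem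
        have hnd : P.support.Nodup := hPpath.support_nodup
        rw [← hspec, Walk.support_append] at hnd
        have hdisj := List.disjoint_of_nodup_append hnd
        have hAtake : A ∈ (P.takeUntil (Sum.inl c) hmem).support :=
          Walk.start_mem_support _
        have : A ∉ Q.support.tail := fun h => hdisj hAtake h
        rw [Walk.support_eq_cons Q]
        intro h
        rcases List.mem_cons.mp h with h | h
        · exact absurd h (by simp [hA])
        · exact this h
      have hW' : (Walk.cons hadjc.symm Q).IsPath :=
        (Walk.cons_isPath_iff _ _).mpr ⟨hQpath, hAQ⟩
      have heq := huniq A _ hW'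
      have : (Walk.cons hadjc.symm Q).getVert 1 = Sum.inl c := by
        rw [Walk.getVert_cons Q hadjc.symm (by norm_num : (1:ℕ) ≠ 0)]
        simp [Walk.getVert_zero]
      rw [heq] at this
      rw [← hP] at this
      exact hne this.symm
    -- the path from inl c is cons hadjc P
    have hWc : (Walk.cons hadjc P).IsPath :=
      (Walk.cons_isPath_iff _ _).mpr ⟨hPpath, hmem⟩
    have hco : c ≠ o := by
      intro h
      subst h
      exact hmem (Walk.end_mem_support P)
    have heqc := (huniq (Sum.inl c) _ hWc).symm
    have hgv : (pw (Sum.inl c)).getVert 1 = A := by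
      rw [heqc, Walk.getVert_cons P hadjc (by norm_num : (1:ℕ) ≠ 0)]
      simp [Walk.getVert_zero]
    show σ c = _
    simp only [σ, if_neg hco, hgv, hA]
  -- now case on which variable p is
  have hne_xy : (Sum.inl a.x : V ⊕ {a // a ∈ Φ}) ≠ Sum.inl a.y := by
    simp [a.hxy]
  rcases hpocc with h | h
  · -- p = a.x is toward root, so c = a.y
    have : Sum.inl a.y ≠ P.getVert 1 := by
      rw [hp1, h]; exact fun hh => a.hxy (congrArg (fun w => match w with | Sum.inl v => v | _ => a.x) hh.symm)
    have := key a.y (Or.inr rfl) this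
    rw [if_neg (Ne.symm a.hxy)] at this
    exact Or.inr this
  · have : Sum.inl a.x ≠ P.getVert 1 := by
      rw [hp1, h]; exact fun hh => a.hxy (congrArg (fun w => match w with | Sum.inl v => v | _ => a.x) hh)
    have := key a.x (Or.inl rfl) this
    rw [if_pos rfl] at this
    exact Or.inl this

end Aux1

section Aux2


/-- one step of the count recursion -/
def cstep (st : Bool × Bool) (AB : ℕ × ℕ) : ℕ × ℕ :=
  (if st.1 = true then AB.1 + AB.2 else if st.2 then AB.1 else AB.2,
   if st.1 = false then AB.1 + AB.2 else if st.2 then AB.1 else AB.2)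

def counts (L : List (Bool × Bool)) : ℕ × ℕ := L.foldr cstep (1, 1)

def chainClause {n : ℕ} (L : List (Bool × Bool)) (hL : L.length = n) (i : Fin n) :
    Clause2 (Fin (n + 1)) :=
  ⟨i.castSucc, i.succ, (L.get (Fin.cast hL.symm i)).1, (L.get (Fin.cast hL.symm i)).2,
    ne_of_lt Fin.castSucc_lt_succ⟩

instance : DecidableEq (Clause2 V) := fun a b =>
  decidable_of_iff (a.x = b.x ∧ a.y = b.y ∧ a.sx = b.sx ∧ a.sy = b.sy)
    (by cases a; cases b; simp)

def chainFormula (L : List (Bool × Bool)) : Finset (Clause2 (Fin (L.length + 1))) :=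
  Finset.univ.image (chainClause L rfl)

lemma mem_chainFormula {L : List (Bool × Bool)} {a : Clause2 (Fin (L.length + 1))} :
    a ∈ chainFormula L ↔ ∃ i, chainClause L rfl i = a := by
  simp [chainFormula]

lemma mem_sols {Φ : Finset (Clause2 V)} {σ : V → Bool} :
    σ ∈ sols Φ ↔ ∀ a ∈ Φ, satClause σ a := by
  simp [sols]

lemma sols_chain_cons (s t : Bool) (L : List (Bool × Bool))
    (σ : Fin (L.length + 2) → Bool) :
    σ ∈ sols (chainFormula ((s, t) :: L)) ↔
      ((σ 0 = s ∨ σ 1 = t) ∧ (σ ∘ Fin.succ) ∈ sols (chainFormula L)) := by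
  simp only [mem_sols]
  constructor
  · intro h
    constructor
    · have := h _ (mem_chainFormula.mpr ⟨⟨0, Nat.succ_pos _⟩, rfl⟩)
      simpa [chainClause, satClause] using this
    · intro a ha
      obtain ⟨i, rfl⟩ := mem_chainFormula.mp ha
      have := h _ (mem_chainFormula.mpr ⟨i.succ, rfl⟩)
      simpa [chainClause, satClause] using this
  · rintro ⟨h0, h1⟩ a ha
    obtain ⟨i, rfl⟩ := mem_chainFormula.mp ha
    rcases i with ⟨k, hk⟩
    match k with
    | 0 => simpa [chainClause, satClause] using h0
    | Nat.succ m =>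
      have hm : m < L.length := by
        simpa [Nat.succ_lt_succ_iff] using hk
      have := h1 _ (mem_chainFormula.mpr ⟨⟨m, hm⟩, rfl⟩)
      simpa [chainClause, satClause, Fin.succ_castSucc] using this

lemma card_filter_split (Φ : Finset (Clause2 V)) (v : V) :
    ((sols Φ).filter fun σ => σ v = true).card
      + ((sols Φ).filter fun σ => σ v = false).card = (sols Φ).card := by
  have h := Finset.card_filter_add_card_filter_not
    (s := sols Φ) (p := fun σ => σ v = true)
  rw [← h]
  have : Finset.filter (fun a => ¬ a v = true) (sols Φ)
      = Finset.filter (fun σ => σ v = false) (sols Φ) :=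
    Finset.filter_congr (by intro σ _; simp)
  rw [this]

lemma count_cons_eq (s t : Bool) (L : List (Bool × Bool)) :
    ((sols (chainFormula ((s, t) :: L))).filter fun σ => σ 0 = s).card
      = (sols (chainFormula L)).card := by
  apply Finset.card_bij (fun σ _ => σ ∘ Fin.succ)
  · intro σ hσ
    rw [Finset.mem_filter] at hσ
    exact ((sols_chain_cons s t L σ).mp hσ.1).2
  · intro σ1 h1 σ2 h2 heq
    rw [Finset.mem_filter] at h1 h2
    funext i
    induction i using Fin.cases with
    | zero => rw [h1.2, h2.2]
    | succ j => exact congrFun heq j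
  · intro τ hτ
    refine ⟨Fin.cons s τ, ?_, ?_⟩
    · rw [Finset.mem_filter]
      constructor
      · rw [sols_chain_cons]
        constructor
        · left; exact Fin.cons_zero _ _
        · have : (Fin.cons s τ : Fin (L.length+2) → Bool) ∘ Fin.succ = τ := by
            funext j; exact Fin.cons_succ _ _ _
          rw [this]; exact hτ
      · exact Fin.cons_zero _ _
    · funext j; simp

lemma count_cons_ne (s t b : Bool) (hb : b ≠ s) (L : List (Bool × Bool)) :
    ((sols (chainFormula ((s, t) :: L))).filter fun σ => σ 0 = b).card
      = ((sols (chainFormula L)).filter fun τ => τ 0 = t).card := by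
  apply Finset.card_bij (fun σ _ => σ ∘ Fin.succ)
  · intro σ hσ
    rw [Finset.mem_filter] at hσ
    obtain ⟨hs, h0⟩ := hσ
    rw [sols_chain_cons] at hs
    rw [Finset.mem_filter]
    refine ⟨hs.2, ?_⟩
    rcases hs.1 with h | h
    · exact absurd (h0.symm.trans h) hb
    · exact (congrArg σ Fin.succ_zero_eq_one).trans h
  · intro σ1 h1 σ2 h2 heq
    rw [Finset.mem_filter] at h1 h2
    funext i
    induction i using Fin.cases with
    | zero => rw [h1.2, h2.2]
    | succ j => exact congrFun heq j
  · intro τ hτ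
    rw [Finset.mem_filter] at hτ
    refine ⟨Fin.cons b τ, ?_, ?_⟩
    · rw [Finset.mem_filter]
      constructor
      · rw [sols_chain_cons]
        constructor
        · right
          have h1 : (1 : Fin (L.length+2)) = Fin.succ 0 := Fin.succ_zero_eq_one.symm
          show (Fin.cons b τ : Fin (L.length+2) → Bool) 1 = t
          rw [h1, Fin.cons_succ]; exact hτ.2
        · have : (Fin.cons b τ : Fin (L.length+2) → Bool) ∘ Fin.succ = τ := by
            funext j; exact Fin.cons_succ _ _ _
          rw [this]; exact hτ.1
      · exact Fin.cons_zero _ _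
    · funext j; simp

lemma count_chain (L : List (Bool × Bool)) :
    (((sols (chainFormula L)).filter fun σ => σ 0 = true).card,
     ((sols (chainFormula L)).filter fun σ => σ 0 = false).card) = counts L := by
  induction L with
  | nil =>
    have hΦ : chainFormula [] = ∅ := rfl
    have hsols : sols (chainFormula []) = Finset.univ := by
      rw [hΦ]; ext σ; simp [sols]
    have hcard : ∀ b : Bool, ((sols (chainFormula [])).filter fun σ => σ 0 = b).card = 1 := by
      intro b
      rw [hsols]
      rw [Finset.card_eq_one]
      refine ⟨fun _ => b, ?_⟩
      ext σ
      simp only [Finset.mem_filter, Finset.mem_univ, true_and, Finset.mem_singleton]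
      constructor
      · intro h; funext i; rw [Fin.eq_zero i]; exact h
      · intro h; rw [h]
    rw [hcard, hcard]; rfl
  | cons st L ih =>
    obtain ⟨s, t⟩ := st
    have hsum := card_filter_split (chainFormula L) 0
    have hA : ((sols (chainFormula L)).filter fun σ => σ 0 = true).card = (counts L).1 := by
      rw [← ih]
    have hB : ((sols (chainFormula L)).filter fun σ => σ 0 = false).card = (counts L).2 := by
      rw [← ih]
    have hc : counts ((s,t) :: L) = cstep (s,t) (counts L) := rfl
    cases s
    · rw [count_cons_eq false t L, count_cons_ne false t true (by simp) L]
      rw [hc, cstep, ← hA, ← hB, ← hsum]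
      cases t <;> simp
    · rw [count_cons_eq true t L, count_cons_ne true t false (by simp) L]
      rw [hc, cstep, ← hA, ← hB, ← hsum]
      cases t <;> simp

def build : ℕ → ℕ → List (Bool × Bool)
  | a, b =>
    if h : 0 < b ∧ b < a then (true, false) :: build (a - b) b
    else if h' : 0 < a ∧ a < b then (false, true) :: build a (b - a)
    else []
termination_by a b => a + b
decreasing_by
  · omega
  · omega

lemma build_correct : ∀ a b : ℕ, 0 < a → 0 < b → Nat.gcd a b = 1 →
    counts (build a b) = (a, b) := by
  intro a b
  induction a, b using build.induct with
  | case1 a b h ih =>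
    intro ha hb hg
    rw [build, dif_pos h]
    have hg' : Nat.gcd (a - b) b = 1 := by
      rw [Nat.gcd_comm, Nat.gcd_sub_self_right (le_of_lt h.2), Nat.gcd_comm]
      exact hg
    have := ih (by omega) hb hg'
    show cstep (true, false) (counts (build (a-b) b)) = (a, b)
    rw [this, cstep]
    simp
    omega
  | case2 a b h h' ih =>
    intro ha hb hg
    rw [build, dif_neg h, dif_pos h']
    have hg' : Nat.gcd a (b - a) = 1 := by
      rw [Nat.gcd_sub_self_right (le_of_lt h'.2)]
      exact hg
    have := ih ha (by omega) hg'
    show cstep (false, true) (counts (build a (b-a))) = (a, b)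
    rw [this, cstep]
    simp
    omega
  | case3 a b h h' =>
    intro ha hb hg
    rw [build, dif_neg h, dif_neg h']
    have hab : a = b := by omega
    have : a = 1 := by
      subst hab
      simpa using hg
    subst hab
    subst this
    rfl

open SimpleGraph in
lemma isAcyclic_of_height {W : Type*} {G : SimpleGraph W} (h : W → ℕ)
    (hinj : Function.Injective h)
    (hadj : ∀ u v, G.Adj u v → h u + 1 = h v ∨ h v + 1 = h u) :
    G.IsAcyclic := by
  rw [isAcyclic_iff_forall_adj_isBridge]
  intro v w hvw
  -- wlog h v + 1 = h w
  have main : ∀ (v w : W), G.Adj v w → h v + 1 = h w →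
      ∀ (a b : W), h a ≤ h v → h w ≤ h b → ∀ p : G.Walk a b, s(v, w) ∈ p.edges := by
    intro v w hvw hh a b hha hhb p
    induction p with
    | nil =>
      exfalso; omega
    | @cons a c b hac q ih =>
      by_cases hc : h c ≤ h v
      · have := ih hc hhb
        rw [SimpleGraph.Walk.edges_cons]
        exact List.mem_cons_of_mem _ this
      · push_neg at hc
        have hd := hadj a c hac
        have hceq : h c = h w := by omega
        have haeq : h a = h v := by omega
        have hceq' : c = w := hinj hceq
        have haeq' : a = v := hinj haeq
        subst hceq'
        subst haeq'
        rw [SimpleGraph.Walk.edges_cons]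
        exact List.mem_cons_self
  rcases hadj v w hvw with hh | hh
  · rw [SimpleGraph.isBridge_iff_adj_and_forall_walk_mem_edges]
    exact fun p => main v w hvw hh v w le_rfl le_rfl p
  · rw [Sym2.eq_swap]
    rw [SimpleGraph.isBridge_iff_adj_and_forall_walk_mem_edges]
    exact fun p => main w v hvw.symm hh w v le_rfl le_rfl p

lemma chainClause_x {L : List (Bool × Bool)} (i : Fin L.length) :
    (chainClause L rfl i).x = i.castSucc := rfl

lemma chain_mem_eq {L : List (Bool × Bool)} {a : Clause2 (Fin (L.length + 1))}
    (ha : a ∈ chainFormula L) :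
    ∃ i : Fin L.length, a = chainClause L rfl i := by
  obtain ⟨i, hi⟩ := mem_chainFormula.mp ha
  exact ⟨i, hi.symm⟩

open SimpleGraph in
lemma chain_isTree (L : List (Bool × Bool)) :
    (factorGraph (chainFormula L)).IsTree := by
  set n := L.length
  set Φ := chainFormula L
  -- the height function
  let h : (Fin (n+1)) ⊕ {a // a ∈ Φ} → ℕ := fun w =>
    match w with
    | Sum.inl v => 2 * v.val
    | Sum.inr a => 2 * a.val.x.val + 1
  constructor
  · -- connected
    have reach : ∀ k : ℕ, ∀ hk : k < n + 1,
        (factorGraph Φ).Reachable (Sum.inl ⟨0, Nat.succ_pos _⟩) (Sum.inl ⟨k, hk⟩) := by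
      intro k
      induction k with
      | zero => intro hk; exact Reachable.refl _
      | succ m ihm =>
        intro hk
        have hm : m < n + 1 := by omega
        have hmn : m < n := by omega
        have h1 : (factorGraph Φ).Adj (Sum.inl ⟨m, hm⟩)
            (Sum.inr ⟨chainClause L rfl ⟨m, hmn⟩, mem_chainFormula.mpr ⟨⟨m, hmn⟩, rfl⟩⟩) := by
          rw [fg_adj_inl_inr]
          left
          rfl
        have h2 : (factorGraph Φ).Adj
            (Sum.inr ⟨chainClause L rfl ⟨m, hmn⟩, mem_chainFormula.mpr ⟨⟨m, hmn⟩, rfl⟩⟩)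
            (Sum.inl ⟨m + 1, hk⟩) := by
          rw [SimpleGraph.adj_comm, fg_adj_inl_inr]
          right
          rfl
        exact ((ihm hm).trans h1.reachable).trans h2.reachable
    constructor
    · -- preconnected
      have hbase : ∀ w, (factorGraph Φ).Reachable (Sum.inl ⟨0, Nat.succ_pos _⟩) w := by
        intro w
        rcases w with v | a
        · rcases v with ⟨k, hk⟩; exact reach k hk
        · obtain ⟨i, hi⟩ := chain_mem_eq a.2
          have hadj : (factorGraph Φ).Adj (Sum.inl i.castSucc) (Sum.inr a) := by
            rw [fg_adj_inl_inr, hi]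
            left
            rfl
          refine Reachable.trans ?_ hadj.reachable
          exact reach i.castSucc.val i.castSucc.isLt

      intro u w
      exact (hbase u).symm.trans (hbase w)
  · -- acyclic
    apply isAcyclic_of_height h
    · -- injective
      intro u w huw
      rcases u with v1 | a1 <;> rcases w with v2 | a2
      · simp only [h] at huw
        have : v1.val = v2.val := by omega
        exact congrArg Sum.inl (Fin.ext this)
      · exfalso; simp only [h] at huw; omega
      · exfalso; simp only [h] at huw; omega
      · simp only [h] at huw
        have hx : a1.val.x = a2.val.x := Fin.ext (by omega)
        obtain ⟨i1, hi1⟩ := chain_mem_eq a1.2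
        obtain ⟨i2, hi2⟩ := chain_mem_eq a2.2
        have : i1 = i2 := by
          have e1 : a1.val.x = i1.castSucc := by rw [hi1]; rfl
          have e2 : a2.val.x = i2.castSucc := by rw [hi2]; rfl
          rw [e1, e2] at hx
          exact Fin.castSucc_injective _ hx
        subst this
        apply congrArg Sum.inr
        exact Subtype.ext (hi1.trans hi2.symm)
    · -- adjacency heights
      intro u w huw
      have hcases : ∀ (v : Fin (n+1)) (a : {a // a ∈ Φ}), occurs v a.val →
          (h (Sum.inl v) + 1 = h (Sum.inr a) ∨ h (Sum.inr a) + 1 = h (Sum.inl v)) := by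
        intro v a hocc
        obtain ⟨i, hi⟩ := chain_mem_eq a.2
        have hx : a.val.x = i.castSucc := by rw [hi]; rfl
        have hy : a.val.y = i.succ := by rw [hi]; rfl
        rcases hocc with hv | hv
        · left
          simp only [h, hv, hx]
        · right
          simp only [h, hv, hx, hy, Fin.val_succ, Fin.coe_castSucc]
          omega
      rcases u with v | a <;> rcases w with v' | a'
      · exfalso
        rw [factorGraph, SimpleGraph.fromRel_adj] at huw
        rcases huw.2 with hf | hf <;> exact hf
      · exact hcases v a' (fg_adj_inl_inr.mp huw)
      · rcases hcases v' a (fg_adj_inl_inr.mp ((SimpleGraph.adj_comm _ _ _).mp huw)) with hh | hh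
        · right; exact hh
        · left; exact hh
      · exfalso
        rw [factorGraph, SimpleGraph.fromRel_adj] at huw
        rcases huw.2 with hf | hf <;> exact hf

end Aux2

/-- **The set of root marginals of finite tree 2-SAT formulas is exactly `ℚ ∩ (0,1)`.** -/
theorem treeMarginals_eq_rat_Ioo :
    treeMarginals = {x : ℝ | ∃ q : ℚ, x = (q : ℝ)} ∩ Set.Ioo (0 : ℝ) 1 := by
  ext x
  constructor
  · rintro ⟨n, Φ, o, hT, hm⟩
    obtain ⟨σT, hσT, hbT⟩ := exists_sol Φ o hT true
    obtain ⟨σF, hσF, hbF⟩ := exists_sol Φ o hT false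
    set cT := ((sols Φ).filter fun σ => σ o = true).card with hcT
    set cF := ((sols Φ).filter fun σ => σ o = false).card with hcF
    have hsum : cT + cF = (sols Φ).card := card_filter_split Φ o
    have hTpos : 0 < cT :=
      Finset.card_pos.mpr ⟨σT, Finset.mem_filter.mpr ⟨hσT, hbT⟩⟩
    have hFpos : 0 < cF :=
      Finset.card_pos.mpr ⟨σF, Finset.mem_filter.mpr ⟨hσF, hbF⟩⟩
    have hx : x = (cT : ℝ) / ((cT : ℝ) + (cF : ℝ)) := by
      rw [← hm, marginal, ← hsum]
      push_cast
      rfl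
    have hden : (0 : ℝ) < (cT : ℝ) + (cF : ℝ) := by positivity
    refine ⟨⟨(cT : ℚ) / ((cT : ℚ) + (cF : ℚ)), ?_⟩, ?_, ?_⟩
    · rw [hx]; push_cast; ring
    · rw [hx]
      apply div_pos _ hden
      exact_mod_cast hTpos
    · rw [hx]
      rw [div_lt_one hden]
      have : (0:ℝ) < (cF : ℝ) := by exact_mod_cast hFpos
      linarith
  · rintro ⟨⟨q, rfl⟩, h0, h1⟩
    have hq0 : 0 < q := by exact_mod_cast h0
    have hq1 : q < 1 := by exact_mod_cast h1
    set p := q.num.toNat with hp'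
    set d := q.den with hd'
    have hnum_pos : 0 < q.num := Rat.num_pos.mpr hq0
    have hpz : (p : ℤ) = q.num := Int.toNat_of_nonneg (le_of_lt hnum_pos)
    have hp : 0 < p := by omega
    have hpd : p < d := by
      have := (Rat.lt_one_iff_num_lt_denom).mpr hq1
      omega
    have hcop : Nat.gcd p d = 1 := by
      have := q.reduced
      have hnat : p = q.num.natAbs := by omega
      rw [hnat]
      exact this
    have hg : Nat.gcd p (d - p) = 1 := by
      rw [Nat.gcd_sub_self_right (le_of_lt hpd)]
      exact hcop
    set L := build p (d - p) with hL'
    have hcounts : counts L = (p, d - p) :=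
      build_correct p (d - p) hp (by omega) hg
    have hchain := count_chain L
    rw [hcounts] at hchain
    have hcT : ((sols (chainFormula L)).filter fun σ => σ 0 = true).card = p :=
      congrArg Prod.fst hchain
    have hcF : ((sols (chainFormula L)).filter fun σ => σ 0 = false).card = d - p :=
      congrArg Prod.snd hchain
    have hcard : (sols (chainFormula L)).card = d := by
      have hs := card_filter_split (chainFormula L) 0
      rw [hcT, hcF] at hs
      rw [← hs]
      exact Nat.add_sub_cancel' (le_of_lt hpd)
    refine ⟨L.length + 1, chainFormula L, 0, chain_isTree L, ?_⟩
    rw [marginal, hcT, hcard, Rat.cast_def, ← hpz, hd']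
    push_cast
    ring
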